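/- For all α ∈ F with α ≠ 0 and all β ∈ F: χ(α,β)^2 = χ(0, α^{1+r}), χ(α,β)^3 = χ(α, β + α^{1+r}), and χ(α,β)^4 = 1; in particular χ(α,β) has order 4 and the cyclic group it generates is {1, χ(α,β), χ(0,α^{1+r}), χ(α,β+α^{1+r})}. -/

import Mathlib

open Matrix

noncomputable section

/-- `r = 2^((m+1)/2)`. -/
def szr (m : ℕ) : ℕ := 2 ^ ((m + 1) / 2)

/-- The Suzuki group generator `χ(α,β)`, a lower unitriangular 4×4 matrix. -/
def szchi {F : Type*} [Field F] (m : ℕ) (α β : F) : Matrix (Fin 4) (Fin 4) F :=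
  !![1, 0, 0, 0;
     α, 1, 0, 0;
     α ^ (1 + szr m) + β, α ^ szr m, 1, 0;
     α ^ (2 + szr m) + α * β + β ^ szr m, β, α, 1]

lemma szr_ne_zero (m : ℕ) : szr m ≠ 0 :=
  Nat.pos_iff_ne_zero.mp (Nat.pow_pos (n := (m + 1) / 2) two_pos)

lemma sz_char_two {F : Type*} [Field F] [Fintype F] {m : ℕ} (hm : Odd m)
    (hF : Fintype.card F = 2 ^ m) : (2 : F) = 0 := by
  have hc : (Fintype.card F : F) = 0 := FiniteField.cast_card_eq_zero F
  rw [hF] at hc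
  push_cast at hc
  exact pow_eq_zero_iff hm.pos.ne' |>.mp hc

lemma sz_charP {F : Type*} [Field F] [Fintype F] {m : ℕ} (hm : Odd m)
    (hF : Fintype.card F = 2 ^ m) : CharP F 2 := by
  have h2 : (2 : F) = 0 := sz_char_two hm hF
  have := CharP.ringChar_of_prime_eq_zero Nat.prime_two h2
  exact this ▸ ringChar.charP F

lemma sz_frob {F : Type*} [Field F] [Fintype F] {m : ℕ} (hm : Odd m)
    (hF : Fintype.card F = 2 ^ m) (x : F) : x ^ (szr m * szr m) = x ^ 2 := by
  have hrr : szr m * szr m = 2 ^ m * 2 := by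
    obtain ⟨k, rfl⟩ := hm
    simp only [szr]
    rw [← pow_add, ← pow_succ]
    congr 1
    omega
  rw [hrr, pow_mul, ← hF, FiniteField.pow_card]

lemma sz_add_pow {F : Type*} [Field F] [Fintype F] {m : ℕ} (hm : Odd m)
    (hF : Fintype.card F = 2 ^ m) (x y : F) :
    (x + y) ^ szr m = x ^ szr m + y ^ szr m := by
  haveI := sz_charP hm hF
  haveI : Fact (Nat.Prime 2) := ⟨Nat.prime_two⟩
  simpa [szr] using add_pow_char_pow x y 2 ((m + 1) / 2)

lemma szchi_sq {F : Type*} [Field F] [Fintype F] {m : ℕ} (hm : Odd m)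
    (hF : Fintype.card F = 2 ^ m) (α β : F) :
    szchi m α β ^ 2 = szchi m 0 (α ^ (1 + szr m)) := by
  have h2 : (2 : F) = 0 := sz_char_two hm hF
  have hfr := sz_frob hm hF (F := F)
  have hr0 := szr_ne_zero m
  ext i j
  rw [pow_two]
  fin_cases i <;> fin_cases j <;>
    simp [szchi, Matrix.mul_apply, Fin.sum_univ_four, zero_pow, hr0] <;>
    first
    | linear_combination α * h2
    | linear_combination α ^ szr m * h2
    | linear_combination (α ^ (1 + szr m) + β) * h2
    | linear_combination β * h2
    | (rw [← pow_mul, show (1 + szr m) * szr m = szr m + szr m * szr m by ring]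
       simp only [pow_add, hfr, pow_one]
       linear_combination (α ^ 2 * α ^ szr m + 2 * α * β + β ^ szr m) * h2)

lemma szchi_zero {F : Type*} [Field F] (m : ℕ) : szchi m (0 : F) 0 = 1 := by
  have hr0 := szr_ne_zero m
  ext i j
  fin_cases i <;> fin_cases j <;>
    simp [szchi, Matrix.one_apply, zero_pow, hr0, Matrix.vecHead, Matrix.vecTail]

lemma szchi_cube {F : Type*} [Field F] [Fintype F] {m : ℕ} (hm : Odd m)
    (hF : Fintype.card F = 2 ^ m) (α β : F) :
    szchi m α β ^ 3 = szchi m α (β + α ^ (1 + szr m)) := by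
  have h2 : (2 : F) = 0 := sz_char_two hm hF
  have hfr := sz_frob hm hF (F := F)
  have hadd := sz_add_pow hm hF (F := F)
  have hr0 := szr_ne_zero m
  rw [show (3 : ℕ) = 2 + 1 by rfl, pow_add, pow_one, szchi_sq hm hF]
  ext i j
  fin_cases i <;> fin_cases j <;>
    simp [szchi, Matrix.mul_apply, Fin.sum_univ_four, zero_pow, hr0, hadd] <;>
    first
    | ring
    | linear_combination α ^ (1 + szr m) * h2
    | linear_combination β * h2
    | (rw [← pow_mul, show (1 + szr m) * szr m = szr m + szr m * szr m by ring]
       simp only [pow_add, hfr, pow_one]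
       linear_combination (α ^ 2 * α ^ szr m + α * β + β ^ szr m) * h2)

/-- for `α ≠ 0`, `χ(α,β)² = χ(0,α^{1+r})`, `χ(α,β)³ = χ(α,β+α^{1+r})`,
`χ(α,β)⁴ = 1`; `χ(α,β)` has order 4 and
`⟨χ(α,β)⟩ = {1, χ(α,β), χ(0,α^{1+r}), χ(α,β+α^{1+r})}`. -/
theorem statement_5 (m : ℕ) (hm : Odd m) (hm3 : 3 ≤ m)
    (F : Type*) [Field F] [Fintype F] (hF : Fintype.card F = 2 ^ m)
    (α β : F) (hα : α ≠ 0) :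
    szchi m α β ^ 2 = szchi m 0 (α ^ (1 + szr m)) ∧
    szchi m α β ^ 3 = szchi m α (β + α ^ (1 + szr m)) ∧
    szchi m α β ^ 4 = 1 ∧
    orderOf (szchi m α β) = 4 ∧
    {M : Matrix (Fin 4) (Fin 4) F | ∃ n : ℕ, M = szchi m α β ^ n}
      = {1, szchi m α β, szchi m 0 (α ^ (1 + szr m)), szchi m α (β + α ^ (1 + szr m))} := by
  have hr0 := szr_ne_zero m
  have hsq := szchi_sq hm hF α β
  have hcube := szchi_cube hm hF α β
  have h4 : szchi m α β ^ 4 = 1 := by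
    rw [show szchi m α β ^ 4 = (szchi m α β ^ 2) ^ 2 from by rw [← pow_mul], hsq, szchi_sq hm hF,
      zero_pow (by omega : 1 + szr m ≠ 0), szchi_zero]
  have hne : szchi m α β ^ 2 ≠ 1 := by
    rw [hsq]
    intro h
    have h20 := congrFun (congrFun h 2) 0
    simp [szchi, Matrix.one_apply, zero_pow, hr0, Matrix.vecHead, Matrix.vecTail] at h20
    exact hα h20
  have horder : orderOf (szchi m α β) = 4 := by
    haveI : Fact (Nat.Prime 2) := ⟨Nat.prime_two⟩
    have := orderOf_eq_prime_pow (x := szchi m α β) (p := 2) (n := 1)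
      (by simpa using hne) (by simpa using h4)
    simpa using this
  refine ⟨hsq, hcube, h4, horder, ?_⟩
  ext M
  simp only [Set.mem_setOf_eq, Set.mem_insert_iff, Set.mem_singleton_iff]
  constructor
  · rintro ⟨n, rfl⟩
    have hmod : szchi m α β ^ n = szchi m α β ^ (n % 4) := by
      conv_lhs => rw [← Nat.div_add_mod n 4]
      rw [pow_add, pow_mul, h4, one_pow, one_mul]
    rw [hmod]
    rcases (by omega : n % 4 = 0 ∨ n % 4 = 1 ∨ n % 4 = 2 ∨ n % 4 = 3) with h | h | h | h <;>
      rw [h]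
    · left; rw [pow_zero]
    · right; left; rw [pow_one]
    · right; right; left; rw [hsq]
    · right; right; right; rw [hcube]
  · rintro (rfl | rfl | rfl | rfl)
    · exact ⟨0, by rw [pow_zero]⟩
    · exact ⟨1, by rw [pow_one]⟩
    · exact ⟨2, hsq.symm⟩
    · exact ⟨3, hcube.symm⟩
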